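/- arXiv:2108.03778 — 2 statements merged into one kernel-verified Lean document; each statement's English description precedes it below -/
import Mathlib

section
/- Let n ≥ 1, let R_1, …, R_n and H_1, …, H_n be strictly positive real numbers, fix k ∈ {1,…,n}, and let π_0, π_1, …, π_n and v_{00}, v_{01}, v_{10}, v_{11}, …, v_{n0}, v_{n1} be real numbers satisfying: (i) π_0 + ∑_{j=1}^{n} π_j = 1; (ii) v_{j1}·H_j = R_j·v_{01} for every j ≠ k; (iii) v_{01}·(∑_{j=1}^{n} R_j) = ∑_{j=1, j≠k}^{n} H_j·v_{j1}; (iv) v_{k1}·H_k = π_k + R_k·v_{01}; (v) v_{q0}·H_q = π_q + R_q·v_{00} for every q ∈ {1,…,n}; and (vi) v_{00}·(∑_{j=1}^{n} R_j) = π_0 + ∑_{j=1, j≠k}^{n} H_j·v_{j0} + H_k·v_{k1}. Then v_{00} = 1/R_k. -/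
/-- Solving the SHS steady-state equations (13)–(17) for link `k`
yields `v_{00} = 1/R_k`. -/
theorem shs_v00_eq_inv_Rk (n : ℕ) (hn : 1 ≤ n) (R H : Fin n → ℝ)
    (hR : ∀ j, 0 < R j) (hH : ∀ j, 0 < H j) (k : Fin n)
    (π0 : ℝ) (π : Fin n → ℝ) (v00 v01 : ℝ) (v0 v1 : Fin n → ℝ)
    (hprob : π0 + ∑ j, π j = 1)
    (h16 : ∀ j, j ≠ k → v1 j * H j = R j * v01)
    (h14 : v01 * (∑ j, R j) = ∑ j ∈ Finset.univ.filter (· ≠ k), H j * v1 j)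
    (h17 : v1 k * H k = π k + R k * v01)
    (h15 : ∀ q, v0 q * H q = π q + R q * v00)
    (h13 : v00 * (∑ j, R j) =
      π0 + (∑ j ∈ Finset.univ.filter (· ≠ k), H j * v0 j) + H k * v1 k) :
    v00 = 1 / R k := by
  have hfilt : (Finset.univ.filter (· ≠ k)) = Finset.univ.erase k := by
    ext x; simp [Finset.mem_erase, and_comm]
  -- Step 1: v01 = 0
  have hsum1 : ∑ j ∈ Finset.univ.filter (· ≠ k), H j * v1 j
      = ∑ j ∈ Finset.univ.erase k, R j * v01 := by
    rw [hfilt]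
    refine Finset.sum_congr rfl fun j hj => ?_
    have hjk : j ≠ k := (Finset.mem_erase.mp hj).1
    rw [mul_comm, h16 j hjk]
  have herase : ∑ j ∈ Finset.univ.erase k, R j = (∑ j, R j) - R k := by
    have := Finset.sum_erase_add Finset.univ R (Finset.mem_univ k)
    linarith
  have hv01 : v01 = 0 := by
    rw [hsum1, ← Finset.sum_mul] at h14
    rw [herase] at h14
    have hRk := hR k
    have : R k * v01 = 0 := by ring_nf at h14 ⊢; nlinarith [h14]
    exact (mul_eq_zero.mp this).resolve_left (ne_of_gt hRk)
  -- Step 2: H k * v1 k = π k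
  have hk : H k * v1 k = π k := by
    rw [mul_comm]; rw [h17, hv01]; ring
  -- Step 3: substitute (v) into (vi)
  have hsum0 : ∑ j ∈ Finset.univ.filter (· ≠ k), H j * v0 j
      = ∑ j ∈ Finset.univ.erase k, (π j + R j * v00) := by
    rw [hfilt]
    refine Finset.sum_congr rfl fun j hj => ?_
    rw [mul_comm, h15 j]
  have hπerase : ∑ j ∈ Finset.univ.erase k, π j = (∑ j, π j) - π k := by
    have := Finset.sum_erase_add Finset.univ π (Finset.mem_univ k)
    linarith
  rw [hsum0, hk, Finset.sum_add_distrib, ← Finset.sum_mul, herase, hπerase] at h13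
  have hRk := hR k
  have : v00 * R k = 1 := by linarith
  field_simp
  linarith
end

section
/- Let n ≥ 1, let R_1, …, R_n and H_1, …, H_n be strictly positive real numbers, fix k ∈ {1,…,n}, and let π_0, π_1, …, π_n and v_{00}, v_{01}, v_{10}, v_{11}, …, v_{n0}, v_{n1} be real numbers satisfying: (i) π_0 + ∑_{j=1}^{n} π_j = 1; (ii) v_{j1}·H_j = R_j·v_{01} for every j ≠ k; (iii) v_{01}·(∑_{j=1}^{n} R_j) = ∑_{j=1, j≠k}^{n} H_j·v_{j1}; (iv) v_{k1}·H_k = π_k + R_k·v_{01}; (v) v_{q0}·H_q = π_q + R_q·v_{00} for every q ∈ {1,…,n}; and (vi) v_{00}·(∑_{j=1}^{n} R_j) = π_0 + ∑_{j=1, j≠k}^{n} H_j·v_{j0} + H_k·v_{k1}. Then the average age of data for link k satisfies v_{00} + ∑_{q=1}^{n} v_{q0} = ∑_{q=1}^{n} π_q/H_q + (1 + ∑_{q=1}^{n} R_q/H_q)·(1/R_k). -/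
/-- Under the SHS steady-state equations (13)–(17) for link `k`,
the average age of data for link `k` satisfies
`v_{00} + ∑_q v_{q0} = ∑_q π_q/H_q + (1 + ∑_q R_q/H_q)·(1/R_k)`. -/
theorem shs_average_age_closed_form (n : ℕ) (hn : 1 ≤ n) (R H : Fin n → ℝ)
    (hR : ∀ j, 0 < R j) (hH : ∀ j, 0 < H j) (k : Fin n)
    (π0 : ℝ) (π : Fin n → ℝ) (v00 v01 : ℝ) (v0 v1 : Fin n → ℝ)
    (hprob : π0 + ∑ j, π j = 1)
    (h16 : ∀ j, j ≠ k → v1 j * H j = R j * v01)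
    (h14 : v01 * (∑ j, R j) = ∑ j ∈ Finset.univ.filter (· ≠ k), H j * v1 j)
    (h17 : v1 k * H k = π k + R k * v01)
    (h15 : ∀ q, v0 q * H q = π q + R q * v00)
    (h13 : v00 * (∑ j, R j) =
      π0 + (∑ j ∈ Finset.univ.filter (· ≠ k), H j * v0 j) + H k * v1 k) :
    v00 + ∑ q, v0 q =
      (∑ q, π q / H q) + (1 + ∑ q, R q / H q) * (1 / R k) := by
  have hRk : R k ≠ 0 := (hR k).ne'
  have hfil : ∀ f : Fin n → ℝ,
      ∑ j ∈ Finset.univ.filter (· ≠ k), f j = (∑ j, f j) - f k := by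
    intro f
    rw [Finset.filter_ne', Finset.sum_erase_eq_sub (Finset.mem_univ k)]
  -- v01 = 0
  have hv01 : v01 = 0 := by
    have h1 : ∑ j ∈ Finset.univ.filter (· ≠ k), H j * v1 j
        = ∑ j ∈ Finset.univ.filter (· ≠ k), R j * v01 :=
      Finset.sum_congr rfl fun j hj => by
        rw [mul_comm, h16 j (Finset.mem_filter.mp hj).2]
    rw [h1, ← Finset.sum_mul, hfil] at h14
    have : v01 * R k = 0 := by ring_nf at h14 ⊢; linarith
    rcases mul_eq_zero.mp this with h | h
    · exact h
    · exact absurd h hRk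
  -- H k * v1 k = π k
  have hvk : H k * v1 k = π k := by rw [mul_comm]; rw [hv01] at h17; linarith
  -- R k * v00 = 1
  have hv00 : R k * v00 = 1 := by
    have h2 : ∑ j ∈ Finset.univ.filter (· ≠ k), H j * v0 j
        = ∑ j ∈ Finset.univ.filter (· ≠ k), (π j + R j * v00) :=
      Finset.sum_congr rfl fun j hj => by rw [mul_comm, h15 j]
    rw [h2, hfil] at h13
    rw [Finset.sum_add_distrib, ← Finset.sum_mul, hvk] at h13
    nlinarith [h13, hprob]
  have hv00' : v00 = 1 / R k := by field_simp; linarith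
  -- v0 q = π q / H q + R q / H q * v00
  have h3 : ∀ q, v0 q = π q / H q + R q / H q * v00 := by
    intro q
    have hHq : H q ≠ 0 := (hH q).ne'
    field_simp
    linarith [h15 q]
  rw [Finset.sum_congr rfl fun q _ => h3 q, Finset.sum_add_distrib,
    ← Finset.sum_mul, hv00']
  ring
end
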